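/- For every N≥0, the function V^N = 𝕄^N h : S^M → [0,∞) is continuous. -/

import Mathlib

open MeasureTheory Finset Filter
open scoped ENNReal

noncomputable section

/-- The analytic data of the change-diagnosis problem: a σ-finite reference measure `m`
on the observation space, probability densities `f₀, …, f_M`, the geometric parameter
`p ∈ (0,1)`, the prior `ν` on the change index, the delay cost `c > 0` and the
terminal-decision costs `a_{ij}` (with `a_{ii} = 0`). -/
structure DiagSetup (E : Type*) [MeasurableSpace E] (M : ℕ) : Type _ where
  /-- σ-finite reference measure -/
  m : Measure E
  hm : SigmaFinite m
  /-- `f 0` is the pre-change density, `f i.succ` the post-change densities -/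
  f : Fin (M + 1) → E → ℝ
  hf_meas : ∀ i, Measurable (f i)
  hf_nonneg : ∀ i x, 0 ≤ f i x
  hf_int : ∀ i, ∫ x, f i x ∂m = 1
  p : ℝ
  hp : p ∈ Set.Ioo (0 : ℝ) 1
  ν : Fin M → ℝ
  hν : ∀ i, 0 < ν i
  hνsum : ∑ i, ν i = 1
  c : ℝ
  hc : 0 < c
  a : Fin (M + 1) → Fin M → ℝ
  ha : ∀ i j, 0 ≤ a i j
  haii : ∀ i : Fin M, a i.succ i = 0
  hM : 1 ≤ M

namespace DiagSetup

variable {E : Type*} [MeasurableSpace E] {M : ℕ}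

/-- `D_i(π, x)`:  `D₀(π,x) = (1-p)π₀f₀(x)` and `D_i(π,x) = (π_i + π₀ p ν_i) f_i(x)`. -/
def D (S : DiagSetup E M) (i : Fin (M + 1)) (π : Fin (M + 1) → ℝ) (x : E) : ℝ :=
  Fin.cases ((1 - S.p) * π 0 * S.f 0 x)
    (fun j => (π j.succ + π 0 * S.p * S.ν j) * S.f j.succ x) i

/-- `D(π, x) = Σ_{i=0}^M D_i(π, x)`. -/
def Dsum (S : DiagSetup E M) (π : Fin (M + 1) → ℝ) (x : E) : ℝ :=
  ∑ i, S.D i π x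

/-- The operator `T`:
`(Tg)(π) = ∫_E D(π,x) g(D₀(π,x)/D(π,x), …, D_M(π,x)/D(π,x)) m(dx)`,
with the integrand interpreted as `0` where `D(π,x) = 0`. -/
def T (S : DiagSetup E M) (g : (Fin (M + 1) → ℝ) → ℝ) (π : Fin (M + 1) → ℝ) : ℝ :=
  ∫ x, (if S.Dsum π x = 0 then 0
        else S.Dsum π x * g fun i => S.D i π x / S.Dsum π x) ∂S.m

/-- `h_j(π) = Σ_{i=0}^M π_i a_{ij}`. -/
def hj (S : DiagSetup E M) (j : Fin M) (π : Fin (M + 1) → ℝ) : ℝ :=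
  ∑ i : Fin (M + 1), π i * S.a i j

/-- `h(π) = min_{j∈{1,…,M}} h_j(π)`. -/
def hmin (S : DiagSetup E M) (π : Fin (M + 1) → ℝ) : ℝ :=
  ⨅ j : Fin M, S.hj j π

/-- The dynamic-programming operator `(𝕄g)(π) = min{h(π), c(1-π₀) + (Tg)(π)}`. -/
def Mop (S : DiagSetup E M) (g : (Fin (M + 1) → ℝ) → ℝ) (π : Fin (M + 1) → ℝ) : ℝ :=
  min (S.hmin π) (S.c * (1 - π 0) + S.T g π)

/-- `V^N = 𝕄^N h`, the value functions of the truncated problems. -/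
def V (S : DiagSetup E M) (N : ℕ) : (Fin (M + 1) → ℝ) → ℝ :=
  S.Mop^[N] S.hmin

/-! ### Auxiliary lemmas -/

variable {E : Type*} [MeasurableSpace E] {M : ℕ}

/-- A uniform bound for all the cost functions. -/
def Abound (S : DiagSetup E M) : ℝ := ∑ i, ∑ j, S.a i j

section Aux

variable (S : DiagSetup E M)

lemma Abound_nonneg : 0 ≤ S.Abound :=
  Finset.sum_nonneg fun i _ => Finset.sum_nonneg fun j _ => S.ha i j

lemma coord_le_one {π : Fin (M + 1) → ℝ} (hπ : π ∈ stdSimplex ℝ (Fin (M + 1)))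
    (i : Fin (M + 1)) : π i ≤ 1 := by
  calc π i ≤ ∑ k, π k := Finset.single_le_sum (fun k _ => hπ.1 k) (Finset.mem_univ i)
  _ = 1 := hπ.2

lemma ν_le_one (j : Fin M) : S.ν j ≤ 1 := by
  calc S.ν j ≤ ∑ k, S.ν k :=
        Finset.single_le_sum (fun k _ => (S.hν k).le) (Finset.mem_univ j)
  _ = 1 := S.hνsum

lemma continuous_hj (j : Fin M) : Continuous (S.hj j) :=
  continuous_finset_sum _ fun i _ => (continuous_apply i).mul continuous_const

lemma continuous_hmin : Continuous S.hmin := by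
  haveI : Nonempty (Fin M) := Fin.pos_iff_nonempty.mp S.hM
  have h : S.hmin = fun π => Finset.univ.inf' Finset.univ_nonempty fun j => S.hj j π := by
    funext π
    rw [hmin, ← Finset.inf'_univ_eq_ciInf]
  rw [h]
  exact Continuous.finset_inf'_apply _ fun j _ => S.continuous_hj j

lemma hj_nonneg (j : Fin M) {π : Fin (M + 1) → ℝ}
    (hπ : π ∈ stdSimplex ℝ (Fin (M + 1))) : 0 ≤ S.hj j π :=
  Finset.sum_nonneg fun i _ => mul_nonneg (hπ.1 i) (S.ha i j)

lemma hmin_nonneg {π : Fin (M + 1) → ℝ} (hπ : π ∈ stdSimplex ℝ (Fin (M + 1))) :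
    0 ≤ S.hmin π := by
  haveI : Nonempty (Fin M) := Fin.pos_iff_nonempty.mp S.hM
  exact le_ciInf fun j => S.hj_nonneg j hπ

lemma hmin_le {π : Fin (M + 1) → ℝ} (hπ : π ∈ stdSimplex ℝ (Fin (M + 1))) :
    S.hmin π ≤ S.Abound := by
  haveI : Nonempty (Fin M) := Fin.pos_iff_nonempty.mp S.hM
  set j0 : Fin M := ⟨0, S.hM⟩
  have h1 : S.hmin π ≤ S.hj j0 π :=
    ciInf_le ⟨0, by rintro y ⟨j, rfl⟩; exact S.hj_nonneg j hπ⟩ j0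
  refine h1.trans ?_
  calc S.hj j0 π ≤ ∑ i, S.a i j0 :=
        Finset.sum_le_sum fun i _ =>
          mul_le_of_le_one_left (S.ha i j0) (coord_le_one hπ i)
  _ ≤ S.Abound :=
        Finset.sum_le_sum fun i _ =>
          Finset.single_le_sum (fun j _ => S.ha i j) (Finset.mem_univ j0)

lemma measurable_D_pair (i : Fin (M + 1)) :
    Measurable fun q : (Fin (M + 1) → ℝ) × E => S.D i q.1 q.2 := by
  induction i using Fin.cases with
  | zero =>
      simp only [D, Fin.cases_zero]
      exact (measurable_const.mul ((measurable_pi_apply 0).comp measurable_fst)).mul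
        ((S.hf_meas 0).comp measurable_snd)
  | succ j =>
      simp only [D, Fin.cases_succ]
      exact (((measurable_pi_apply j.succ).comp measurable_fst).add
        ((((measurable_pi_apply 0).comp measurable_fst).mul measurable_const).mul
          measurable_const)).mul ((S.hf_meas j.succ).comp measurable_snd)

lemma measurable_D (i : Fin (M + 1)) (π : Fin (M + 1) → ℝ) :
    Measurable fun x => S.D i π x :=
  (S.measurable_D_pair i).comp measurable_prodMk_left

lemma continuous_D (i : Fin (M + 1)) (x : E) : Continuous fun π => S.D i π x := by
  induction i using Fin.cases with
  | zero =>
      simp only [D, Fin.cases_zero]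
      exact (continuous_const.mul (continuous_apply 0)).mul continuous_const
  | succ j =>
      simp only [D, Fin.cases_succ]
      exact ((continuous_apply j.succ).add
        (((continuous_apply 0).mul continuous_const).mul continuous_const)).mul
        continuous_const

lemma D_nonneg (i : Fin (M + 1)) {π : Fin (M + 1) → ℝ}
    (hπ : π ∈ stdSimplex ℝ (Fin (M + 1))) (x : E) : 0 ≤ S.D i π x := by
  induction i using Fin.cases with
  | zero =>
      simp only [D, Fin.cases_zero]
      exact mul_nonneg (mul_nonneg (by linarith [S.hp.2]) (hπ.1 0)) (S.hf_nonneg 0 x)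
  | succ j =>
      simp only [D, Fin.cases_succ]
      exact mul_nonneg (add_nonneg (hπ.1 j.succ)
        (mul_nonneg (mul_nonneg (hπ.1 0) S.hp.1.le) (S.hν j).le)) (S.hf_nonneg j.succ x)

lemma D_le (i : Fin (M + 1)) {π : Fin (M + 1) → ℝ}
    (hπ : π ∈ stdSimplex ℝ (Fin (M + 1))) (x : E) : S.D i π x ≤ 2 * S.f i x := by
  induction i using Fin.cases with
  | zero =>
      simp only [D, Fin.cases_zero]
      have h1 : (1 - S.p) * π 0 ≤ 2 := by
        have := coord_le_one hπ 0
        have := hπ.1 0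
        nlinarith [S.hp.1, S.hp.2]
      exact mul_le_mul_of_nonneg_right h1 (S.hf_nonneg 0 x)
  | succ j =>
      simp only [D, Fin.cases_succ]
      have h1 : π j.succ + π 0 * S.p * S.ν j ≤ 2 := by
        have h2 := coord_le_one hπ j.succ
        have h3 := coord_le_one hπ 0
        have h4 := hπ.1 0
        have h5 := S.ν_le_one j
        have h6 := (S.hν j).le
        have h7 : π 0 * S.p ≤ 1 := mul_le_one₀ h3 S.hp.1.le S.hp.2.le
        have h8 : π 0 * S.p * S.ν j ≤ 1 := mul_le_one₀ h7 h6 h5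
        linarith
      exact mul_le_mul_of_nonneg_right h1 (S.hf_nonneg j.succ x)

lemma measurable_Dsum_pair :
    Measurable fun q : (Fin (M + 1) → ℝ) × E => S.Dsum q.1 q.2 := by
  simp only [Dsum]
  exact Finset.measurable_sum _ fun i _ => S.measurable_D_pair i

lemma measurable_Dsum (π : Fin (M + 1) → ℝ) : Measurable fun x => S.Dsum π x :=
  S.measurable_Dsum_pair.comp measurable_prodMk_left

lemma continuous_Dsum (x : E) : Continuous fun π => S.Dsum π x :=
  continuous_finset_sum _ fun i _ => S.continuous_D i x

lemma Dsum_nonneg {π : Fin (M + 1) → ℝ} (hπ : π ∈ stdSimplex ℝ (Fin (M + 1))) (x : E) :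
    0 ≤ S.Dsum π x :=
  Finset.sum_nonneg fun i _ => S.D_nonneg i hπ x

lemma Dsum_le {π : Fin (M + 1) → ℝ} (hπ : π ∈ stdSimplex ℝ (Fin (M + 1))) (x : E) :
    S.Dsum π x ≤ 2 * ∑ i, S.f i x := by
  rw [Finset.mul_sum]
  exact Finset.sum_le_sum fun i _ => S.D_le i hπ x

lemma integrable_f (i : Fin (M + 1)) : Integrable (S.f i) S.m := by
  by_contra h
  have := integral_undef h
  rw [S.hf_int i] at this
  norm_num at this

lemma integrable_fsum : Integrable (fun x => ∑ i, S.f i x) S.m := by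
  exact integrable_finset_sum _ fun i _ => S.integrable_f i

lemma ratio_mem {π : Fin (M + 1) → ℝ} {x : E} (hπ : π ∈ stdSimplex ℝ (Fin (M + 1)))
    (hx : S.Dsum π x ≠ 0) :
    (fun i => S.D i π x / S.Dsum π x) ∈ stdSimplex ℝ (Fin (M + 1)) := by
  have h0 : 0 < S.Dsum π x := lt_of_le_of_ne (S.Dsum_nonneg hπ x) (Ne.symm hx)
  refine ⟨fun i => div_nonneg (S.D_nonneg i hπ x) h0.le, ?_⟩
  rw [← Finset.sum_div]
  exact div_self hx

/-- The integrand of `T`. -/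
def Tker (S : DiagSetup E M) (g : (Fin (M + 1) → ℝ) → ℝ) (π : Fin (M + 1) → ℝ) (x : E) : ℝ :=
  if S.Dsum π x = 0 then 0 else S.Dsum π x * g fun i => S.D i π x / S.Dsum π x

lemma T_eq (g : (Fin (M + 1) → ℝ) → ℝ) (π : Fin (M + 1) → ℝ) :
    S.T g π = ∫ x, S.Tker g π x ∂S.m := rfl

lemma measurable_Tker_pair {g : (Fin (M + 1) → ℝ) → ℝ} (hg : Measurable g) :
    Measurable fun q : (Fin (M + 1) → ℝ) × E => S.Tker g q.1 q.2 := by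
  refine Measurable.ite ?_ measurable_const ?_
  · exact measurableSet_eq_fun S.measurable_Dsum_pair measurable_const
  · exact S.measurable_Dsum_pair.mul (hg.comp (measurable_pi_lambda _ fun i =>
      (S.measurable_D_pair i).div S.measurable_Dsum_pair))

lemma measurable_Tker {g : (Fin (M + 1) → ℝ) → ℝ} (hg : Measurable g)
    (π : Fin (M + 1) → ℝ) : Measurable fun x => S.Tker g π x :=
  (S.measurable_Tker_pair hg).comp measurable_prodMk_left

lemma norm_Tker_le {g : (Fin (M + 1) → ℝ) → ℝ}
    (hb : ∀ π ∈ stdSimplex ℝ (Fin (M + 1)), g π ∈ Set.Icc 0 S.Abound)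
    {π : Fin (M + 1) → ℝ} (hπ : π ∈ stdSimplex ℝ (Fin (M + 1))) (x : E) :
    ‖S.Tker g π x‖ ≤ S.Abound * S.Dsum π x := by
  rw [Tker]
  split_ifs with h
  · simp [h]
  · have hr := S.ratio_mem hπ h
    have hg0 := (hb _ hr).1
    have hgA := (hb _ hr).2
    have hD := S.Dsum_nonneg hπ x
    rw [Real.norm_eq_abs, abs_of_nonneg (mul_nonneg hD hg0), mul_comm (S.Abound)]
    exact mul_le_mul_of_nonneg_left hgA hD

lemma Tker_nonneg {g : (Fin (M + 1) → ℝ) → ℝ}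
    (hg0 : ∀ π ∈ stdSimplex ℝ (Fin (M + 1)), 0 ≤ g π)
    {π : Fin (M + 1) → ℝ} (hπ : π ∈ stdSimplex ℝ (Fin (M + 1))) (x : E) :
    0 ≤ S.Tker g π x := by
  rw [Tker]
  split_ifs with h
  · exact le_refl 0
  · exact mul_nonneg (S.Dsum_nonneg hπ x) (hg0 _ (S.ratio_mem hπ h))

lemma T_nonneg {g : (Fin (M + 1) → ℝ) → ℝ}
    (hg0 : ∀ π ∈ stdSimplex ℝ (Fin (M + 1)), 0 ≤ g π)
    {π : Fin (M + 1) → ℝ} (hπ : π ∈ stdSimplex ℝ (Fin (M + 1))) : 0 ≤ S.T g π := by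
  rw [T_eq]
  exact integral_nonneg fun x => S.Tker_nonneg hg0 hπ x

lemma T_continuousOn {g : (Fin (M + 1) → ℝ) → ℝ} (hg : Measurable g)
    (hgc : ContinuousOn g (stdSimplex ℝ (Fin (M + 1))))
    (hb : ∀ π ∈ stdSimplex ℝ (Fin (M + 1)), g π ∈ Set.Icc 0 S.Abound) :
    ContinuousOn (S.T g) (stdSimplex ℝ (Fin (M + 1))) := by
  intro π₀ hπ₀
  have hTe : S.T g = fun π => ∫ x, S.Tker g π x ∂S.m := rfl
  rw [hTe]
  refine MeasureTheory.continuousWithinAt_of_dominated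
    (bound := fun x => S.Abound * (2 * ∑ i, S.f i x)) ?_ ?_ ?_ ?_
  · exact Eventually.of_forall fun π => (S.measurable_Tker hg π).aestronglyMeasurable
  · refine eventually_mem_nhdsWithin.mono fun π hπ => ae_of_all _ fun x => ?_
    calc ‖S.Tker g π x‖ ≤ S.Abound * S.Dsum π x := S.norm_Tker_le hb hπ x
    _ ≤ S.Abound * (2 * ∑ i, S.f i x) :=
        mul_le_mul_of_nonneg_left (S.Dsum_le hπ x) S.Abound_nonneg
  · exact (S.integrable_fsum.const_mul 2).const_mul S.Abound
  · refine Eventually.of_forall fun x => ?_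
    by_cases hx : S.Dsum π₀ x = 0
    · have hb0 : ∀ᶠ π in nhdsWithin π₀ (stdSimplex ℝ (Fin (M + 1))),
          ‖S.Tker g π x‖ ≤ S.Abound * S.Dsum π x :=
        eventually_mem_nhdsWithin.mono fun π hπ => S.norm_Tker_le hb hπ x
      have htend : Tendsto (fun π => S.Abound * S.Dsum π x)
          (nhdsWithin π₀ (stdSimplex ℝ (Fin (M + 1)))) (nhds 0) := by
        have := ((S.continuous_Dsum x).tendsto π₀).const_mul S.Abound
        rw [hx, mul_zero] at this
        exact this.mono_left nhdsWithin_le_nhds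
      have h0 : S.Tker g π₀ x = 0 := if_pos hx
      rw [ContinuousWithinAt, h0]
      exact squeeze_zero_norm' hb0 htend
    · have hU : {π | S.Dsum π x ≠ 0} ∈ nhds π₀ :=
        (isOpen_compl_iff.mpr (isClosed_eq (S.continuous_Dsum x) continuous_const)).mem_nhds hx
      rw [← continuousWithinAt_inter hU]
      have hr : ContinuousWithinAt (fun π => (fun i => S.D i π x / S.Dsum π x))
          (stdSimplex ℝ (Fin (M + 1)) ∩ {π | S.Dsum π x ≠ 0}) π₀ := by
        refine ContinuousAt.continuousWithinAt ?_
        exact continuousAt_pi.mpr fun i =>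
          ((S.continuous_D i x).continuousAt).div ((S.continuous_Dsum x).continuousAt) hx
      have hmaps : Set.MapsTo (fun π => (fun i => S.D i π x / S.Dsum π x))
          (stdSimplex ℝ (Fin (M + 1)) ∩ {π | S.Dsum π x ≠ 0})
          (stdSimplex ℝ (Fin (M + 1))) := fun π hπ => S.ratio_mem hπ.1 hπ.2
      have hc : ContinuousWithinAt
          (fun π => S.Dsum π x * g fun i => S.D i π x / S.Dsum π x)
          (stdSimplex ℝ (Fin (M + 1)) ∩ {π | S.Dsum π x ≠ 0}) π₀ :=
        ((S.continuous_Dsum x).continuousWithinAt).mul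
          (ContinuousWithinAt.comp (hgc _ (S.ratio_mem hπ₀ hx)) hr hmaps)
      exact hc.congr (fun π hπ => if_neg hπ.2) (if_neg hx)

lemma measurable_T {g : (Fin (M + 1) → ℝ) → ℝ} (hg : Measurable g) :
    Measurable (S.T g) := by
  haveI := S.hm
  have h : StronglyMeasurable fun π => ∫ x, S.Tker g π x ∂S.m :=
    StronglyMeasurable.integral_prod_right
      (f := fun π x => S.Tker g π x) (S.measurable_Tker_pair hg).stronglyMeasurable
  exact h.measurable

lemma Mop_measurable {g : (Fin (M + 1) → ℝ) → ℝ} (hg : Measurable g) :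
    Measurable (S.Mop g) := by
  have h1 : Measurable fun π : Fin (M + 1) → ℝ => S.c * (1 - π 0) :=
    measurable_const.mul (measurable_const.sub (measurable_pi_apply 0))
  exact S.continuous_hmin.measurable.min (h1.add (S.measurable_T hg))

lemma Mop_continuousOn {g : (Fin (M + 1) → ℝ) → ℝ} (hg : Measurable g)
    (hgc : ContinuousOn g (stdSimplex ℝ (Fin (M + 1))))
    (hb : ∀ π ∈ stdSimplex ℝ (Fin (M + 1)), g π ∈ Set.Icc 0 S.Abound) :
    ContinuousOn (S.Mop g) (stdSimplex ℝ (Fin (M + 1))) := by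
  have h1 : Continuous fun π : Fin (M + 1) → ℝ => S.c * (1 - π 0) :=
    continuous_const.mul (continuous_const.sub (continuous_apply 0))
  exact continuous_min.comp_continuousOn
    (S.continuous_hmin.continuousOn.prodMk (h1.continuousOn.add (S.T_continuousOn hg hgc hb)))

lemma Mop_mem_Icc {g : (Fin (M + 1) → ℝ) → ℝ}
    (hb : ∀ π ∈ stdSimplex ℝ (Fin (M + 1)), g π ∈ Set.Icc 0 S.Abound)
    {π : Fin (M + 1) → ℝ} (hπ : π ∈ stdSimplex ℝ (Fin (M + 1))) :
    S.Mop g π ∈ Set.Icc 0 S.Abound := by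
  constructor
  · refine le_min (S.hmin_nonneg hπ)
      (add_nonneg (mul_nonneg S.hc.le ?_) (S.T_nonneg (fun q hq => (hb q hq).1) hπ))
    linarith [coord_le_one hπ 0]
  · exact (min_le_left _ _).trans (S.hmin_le hπ)

end Aux

end DiagSetup

/-- for every `N ≥ 0`, the truncated value function `V^N = 𝕄^N h` is a
continuous nonnegative function on the simplex `S^M`. -/
theorem truncated_value_function_continuous {E : Type*} [MeasurableSpace E] {M : ℕ}
    (S : DiagSetup E M) (N : ℕ) :
    ContinuousOn (S.V N) (stdSimplex ℝ (Fin (M + 1))) ∧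
    ∀ π ∈ stdSimplex ℝ (Fin (M + 1)), 0 ≤ S.V N π := by
  suffices H : Measurable (S.V N) ∧ ContinuousOn (S.V N) (stdSimplex ℝ (Fin (M + 1))) ∧
      ∀ π ∈ stdSimplex ℝ (Fin (M + 1)), S.V N π ∈ Set.Icc 0 S.Abound by
    exact ⟨H.2.1, fun π hπ => (H.2.2 π hπ).1⟩
  induction N with
  | zero =>
      simp only [DiagSetup.V, Function.iterate_zero, id]
      exact ⟨S.continuous_hmin.measurable, S.continuous_hmin.continuousOn,
        fun π hπ => ⟨S.hmin_nonneg hπ, S.hmin_le hπ⟩⟩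
  | succ n ih =>
      have hv : S.V (n + 1) = S.Mop (S.V n) := by
        simp only [DiagSetup.V, Function.iterate_succ_apply']
      rw [hv]
      exact ⟨S.Mop_measurable ih.1, S.Mop_continuousOn ih.1 ih.2.1 ih.2.2,
        fun π hπ => S.Mop_mem_Icc ih.2.2 hπ⟩
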